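/- Let 𝔤 = ℝ³ with orthonormal basis (e₁,e₂,e₃), inner product the standard Euclidean one, and Lie bracket [e₁,e₂] = λe₃, [e₁,e₃] = −λe₂, [e₂,e₃] = 0 for a fixed λ < 0. Then 𝔤 is a pseudo-Riemannian Lie algebra: its infinitesimal Levi-Civita connection A satisfies [A_X Y, Z] + [X, A_Z Y] = 0 for all X,Y,Z ∈ 𝔤. -/

import Mathlib

/-- `ℝ³` with orthonormal basis `e₁,e₂,e₃`, Euclidean inner product, and
bracket `[e₁,e₂] = λe₃`, `[e₁,e₃] = −λe₂`, `[e₂,e₃] = 0` (`λ < 0`) is a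
pseudo-Riemannian Lie algebra: `[A_X Y, Z] + [X, A_Z Y] = 0` for all
`X, Y, Z`. -/
theorem example_R3_pseudo_riemannian
    (L : Type*) [LieRing L] [LieAlgebra ℝ L]
    (b : L →ₗ[ℝ] L →ₗ[ℝ] ℝ) (e : Fin 3 → L) (lam : ℝ) (hlam : lam < 0)
    (horth : ∀ i j, b (e i) (e j) = if i = j then 1 else 0)
    (hspan : Submodule.span ℝ (Set.range e) = ⊤)
    (h12 : ⁅e 0, e 1⁆ = lam • e 2)
    (h13 : ⁅e 0, e 2⁆ = (-lam) • e 1)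
    (h23 : ⁅e 1, e 2⁆ = 0)
    (A : L →ₗ[ℝ] L →ₗ[ℝ] L)
    (hK : ∀ x y z, 2 * b (A x y) z = b ⁅x, y⁆ z + b ⁅z, x⁆ y + b ⁅z, y⁆ x) :
    ∀ X Y Z : L, ⁅A X Y, Z⁆ + ⁅X, A Z Y⁆ = 0 := by
  -- linear independence of `e`
  have hli : LinearIndependent ℝ e := by
    rw [Fintype.linearIndependent_iff]
    intro g hg j
    have := congrArg (fun v => b v (e j)) hg
    simpa [Finset.sum_apply, horth, Finset.sum_ite_eq'] using this
  let B : Module.Basis (Fin 3) ℝ L := Module.Basis.mk hli (by rw [hspan])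
  have hB : ∀ i, B i = e i := fun i => Module.Basis.mk_apply hli _ i
  have hcoef : ∀ (v : L) (j : Fin 3), b v (e j) = B.repr v j := by
    intro v j
    conv_lhs => rw [← B.sum_repr v]
    simp [hB, horth, Finset.sum_ite_eq']
  have hrep : ∀ v : L, v = ∑ k, b v (e k) • e k := by
    intro v
    conv_lhs => rw [← B.sum_repr v]
    exact Finset.sum_congr rfl fun k _ => by rw [hcoef, hB]
  -- bracket table
  have h00 : ⁅e 0, e 0⁆ = (0 : L) := lie_self _
  have h11 : ⁅e 1, e 1⁆ = (0 : L) := lie_self _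
  have h22 : ⁅e 2, e 2⁆ = (0 : L) := lie_self _
  have h21 : ⁅e 1, e 0⁆ = (-lam) • e 2 := by
    rw [← lie_skew, h12, neg_smul]
  have h31 : ⁅e 2, e 0⁆ = lam • e 1 := by
    rw [← lie_skew, h13, neg_smul, neg_neg]
  have h32 : ⁅e 2, e 1⁆ = (0 : L) := by
    rw [← lie_skew, h23, neg_zero]
  -- values of A on the basis
  have key : ∀ i j k, b (A (e i) (e j)) (e k)
      = b (if i = 0 then ⁅e 0, e j⁆ else 0) (e k) := by
    intro i j k
    have h2 := hK (e i) (e j) (e k)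
    fin_cases i <;> fin_cases j <;> fin_cases k <;>
      simp only [Fin.zero_eta, Fin.mk_one, Fin.reduceFinMk, Fin.isValue,
        h00, h11, h22, h12, h13, h23, h21, h31, h32, horth, map_zero,
        map_smul, LinearMap.zero_apply, LinearMap.smul_apply, smul_eq_mul,
        Fin.reduceEq, reduceIte, mul_one, mul_zero, add_zero,
        zero_add, neg_mul, one_mul, neg_zero] at h2 ⊢ <;> linarith
  have hA : ∀ i j, A (e i) (e j) = if i = 0 then ⁅e 0, e j⁆ else 0 := by
    intro i j
    rw [hrep (A (e i) (e j)), hrep (if i = 0 then ⁅e 0, e j⁆ else 0)]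
    exact Finset.sum_congr rfl fun k _ => by rw [key]
  -- trilinear map F X Y Z = ⁅A X Y, Z⁆ + ⁅X, A Z Y⁆
  let adL : L →ₗ[ℝ] Module.End ℝ L := LinearMap.mk₂ ℝ (fun x y => ⁅x, y⁆) add_lie smul_lie lie_add lie_smul
  have adL_apply : ∀ x y : L, adL x y = ⁅x, y⁆ := fun x y => rfl
  let F : L →ₗ[ℝ] L →ₗ[ℝ] L →ₗ[ℝ] L :=
    LinearMap.mk₂ ℝ (fun X Y => adL (A X Y) + (adL X) ∘ₗ ((A.flip) Y))
      (fun X X' Y => by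
        simp only [map_add, LinearMap.add_apply, LinearMap.add_comp]
        abel)
      (fun c X Y => by
        simp only [map_smul, LinearMap.smul_apply, LinearMap.smul_comp]
        module)
      (fun X Y Y' => by
        simp only [map_add, LinearMap.add_apply, LinearMap.comp_add]
        abel)
      (fun c X Y => by
        simp only [map_smul, LinearMap.smul_apply, LinearMap.comp_smul]
        module)
  have hFapp : ∀ X Y Z : L, F X Y Z = ⁅A X Y, Z⁆ + ⁅X, A Z Y⁆ := by
    intro X Y Z
    simp [F, adL_apply, LinearMap.mk₂_apply]
  have hF0 : F = 0 := by
    refine B.ext fun i => B.ext fun j => B.ext fun k => ?_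
    simp only [hB, LinearMap.zero_apply]
    rw [hFapp, hA, hA]
    fin_cases i <;> fin_cases j <;> fin_cases k <;>
      simp only [Fin.zero_eta, Fin.mk_one, Fin.reduceFinMk, Fin.isValue,
        Fin.reduceEq, reduceIte] <;>
      simp [h00, h11, h22, h12, h13, h23, h21, h31, h32, lie_smul, smul_lie,
        smul_smul]
  intro X Y Z
  rw [← hFapp, hF0]
  rfl
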